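/- arXiv:2504.11110 — 2 statements merged into one kernel-verified Lean document; each statement's English description precedes it below -/
import Mathlib

section
/- Let α ∈ (0,1). Let x be a random variable uniformly distributed on {0,1}, let y ∈ ℂ be a fixed symbol with |y| = 1, and let h_A ~ CN(0,1) and h_C ~ CN(0,1) be circularly-symmetric complex Gaussians such that x, h_A, h_C are mutually independent. Then E[ |√(1−α)·h_A·x + √α·h_C·y|² ] = (1−α)/2 + α. Moreover, (1/2)·((1−α)/2 + α) + (1/2)·((1/2)·1 + (1/2)·(2−α)) = 1; that is, in the DTRTF scheme the expected received-symbol energy averaged over a paired pair of time-slots (slot k carrying the superposed symbols, and slot n+k carrying the helper's symbol with energy 1 or 2−α each with probability 1/2) equals unity, consistent with the pre-countermeasure value. (Proposition 1(2).) -/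
open MeasureTheory ProbabilityTheory

/-- `W` is a circularly-symmetric complex Gaussian random variable with mean `0` and
variance `σ2` under `μ`. -/
def IsCN {Ω : Type*} [MeasurableSpace Ω] (μ : Measure Ω) (W : Ω → ℂ) (σ2 : ℝ) : Prop :=
  IndepFun (fun ω => (W ω).re) (fun ω => (W ω).im) μ ∧
  μ.map (fun ω => (W ω).re) = gaussianReal 0 (σ2 / 2).toNNReal ∧
  μ.map (fun ω => (W ω).im) = gaussianReal 0 (σ2 / 2).toNNReal

section DTRTFAux

open Real Filter
open scoped NNReal ENNReal


lemma tendsto_exp_neg_sq_atTop : Tendsto (fun x : ℝ => rexp (-x^2)) atTop (nhds 0) := by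
  have h : Tendsto (fun x : ℝ => -x^2) atTop atBot := by
    have := (tendsto_pow_atTop (two_ne_zero)).comp (tendsto_id (α := ℝ))
    simpa using this.neg_atBot
  exact Real.tendsto_exp_atBot.comp h

lemma gauss_int1 : ∫ x : ℝ, x * rexp (-x^2) = 0 := by
  have hderiv : ∀ x : ℝ, HasDerivAt (fun x : ℝ => -(2:ℝ)⁻¹ * rexp (-x^2)) (x * rexp (-x^2)) x := by
    intro x
    have h1 : HasDerivAt (fun x : ℝ => -x^2) (-(2*x)) x := by
      simpa using (hasDerivAt_pow 2 x).fun_neg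
    have := (h1.exp).const_mul (-(2:ℝ)⁻¹)
    refine this.congr_deriv ?_
    ring
  have hint : MeasureTheory.Integrable (fun x : ℝ => x * rexp (-x^2)) := by
    have := integrable_mul_exp_neg_mul_sq (b := 1) one_pos
    simpa using this
  have htop : Tendsto (fun x : ℝ => -(2:ℝ)⁻¹ * rexp (-x^2)) atTop (nhds 0) := by
    simpa using tendsto_exp_neg_sq_atTop.const_mul (-(2:ℝ)⁻¹)
  have hbot : Tendsto (fun x : ℝ => -(2:ℝ)⁻¹ * rexp (-x^2)) atBot (nhds 0) := by
    have := htop.comp ((tendsto_neg_atBot_atTop : Tendsto (fun x : ℝ => -x) atBot atTop))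
    simpa [Function.comp_def, neg_sq] using this
  have := MeasureTheory.integral_of_hasDerivAt_of_tendsto hderiv hint hbot htop
  simpa using this

lemma integrable_sq_exp : MeasureTheory.Integrable (fun x : ℝ => x^2 * rexp (-x^2)) := by
  have := integrable_rpow_mul_exp_neg_mul_sq (b := 1) one_pos (s := 2) (by norm_num)
  simp only [neg_mul, one_mul] at this
  have heq : (fun x : ℝ => x ^ (2:ℝ) * rexp (-x^2)) = fun x : ℝ => x^2 * rexp (-x^2) := by
    funext x
    rw [show ((2:ℝ) = ((2:ℕ):ℝ)) by norm_num, Real.rpow_natCast]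
  rwa [heq] at this

lemma tendsto_mul_exp_neg_sq_atTop : Tendsto (fun x : ℝ => x * rexp (-x^2)) atTop (nhds 0) := by
  have h := rpow_mul_exp_neg_mul_sq_isLittleO_exp_neg (b := 1) one_pos 1
  have h2 : (fun x : ℝ => x * rexp (-x^2)) =ᶠ[atTop] fun x : ℝ => x ^ (1:ℝ) * rexp (-1 * x ^ 2) := by
    filter_upwards [eventually_gt_atTop (0:ℝ)] with x hx
    rw [Real.rpow_one]
    ring_nf
  have h3 : Tendsto (fun x : ℝ => rexp (-(1/2) * x)) atTop (nhds 0) := by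
    have : Tendsto (fun x : ℝ => -(1/2) * x) atTop atBot := by
      apply Tendsto.const_mul_atTop_of_neg (by norm_num) tendsto_id
    exact Real.tendsto_exp_atBot.comp this
  have := (h.isBigO.trans_tendsto h3)
  exact (Tendsto.congr' h2.symm this)

lemma gauss_int2 : ∫ x : ℝ, x^2 * rexp (-x^2) = Real.sqrt π / 2 := by
  have hderiv : ∀ x : ℝ, HasDerivAt (fun x : ℝ => -(2:ℝ)⁻¹ * (x * rexp (-x^2)))
      (x^2 * rexp (-x^2) - (2:ℝ)⁻¹ * rexp (-x^2)) x := by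
    intro x
    have h1 : HasDerivAt (fun x : ℝ => -x^2) (-(2*x)) x := by
      simpa using (hasDerivAt_pow 2 x).fun_neg
    have h2 : HasDerivAt (fun x : ℝ => x * rexp (-x^2))
        (1 * rexp (-x^2) + x * (rexp (-x^2) * -(2*x))) x :=
      (hasDerivAt_id x).mul h1.exp
    have := h2.const_mul (-(2:ℝ)⁻¹)
    refine this.congr_deriv ?_
    ring
  have hint : MeasureTheory.Integrable
      (fun x : ℝ => x^2 * rexp (-x^2) - (2:ℝ)⁻¹ * rexp (-x^2)) := by
    apply integrable_sq_exp.sub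
    exact ((integrable_exp_neg_mul_sq one_pos).const_mul (2:ℝ)⁻¹).congr
      (by filter_upwards with x; simp)
  have htop : Tendsto (fun x : ℝ => -(2:ℝ)⁻¹ * (x * rexp (-x^2))) atTop (nhds 0) := by
    simpa using tendsto_mul_exp_neg_sq_atTop.const_mul (-(2:ℝ)⁻¹)
  have hbot : Tendsto (fun x : ℝ => -(2:ℝ)⁻¹ * (x * rexp (-x^2))) atBot (nhds 0) := by
    have := htop.comp (tendsto_neg_atBot_atTop : Tendsto (fun x : ℝ => -x) atBot atTop)
    have h2 : ((fun x : ℝ => -(2:ℝ)⁻¹ * (x * rexp (-x^2))) ∘ (fun x : ℝ => -x))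
        = fun x : ℝ => (2:ℝ)⁻¹ * (x * rexp (-x^2)) := by
      funext x; simp only [Function.comp_apply, neg_sq]; ring
    rw [h2] at this
    simpa using this.neg
  have key := MeasureTheory.integral_of_hasDerivAt_of_tendsto hderiv hint hbot htop
  simp only [sub_zero, sub_self] at key
  have hsplit : ∫ x : ℝ, (x^2 * rexp (-x^2) - (2:ℝ)⁻¹ * rexp (-x^2))
      = (∫ x : ℝ, x^2 * rexp (-x^2)) - (2:ℝ)⁻¹ * ∫ x : ℝ, rexp (-x^2) := by
    rw [MeasureTheory.integral_sub integrable_sq_exp]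
    · rw [MeasureTheory.integral_const_mul]
    · exact ((integrable_exp_neg_mul_sq one_pos).const_mul (2:ℝ)⁻¹).congr
        (by filter_upwards with x; simp)
  have hg : ∫ x : ℝ, rexp (-x^2) = Real.sqrt π := by
    have := integral_gaussian 1
    simpa using this
  rw [hsplit, hg] at key
  linarith [key]

lemma pdf_half_eq (x : ℝ) : gaussianPDFReal 0 ((1:ℝ)/2).toNNReal x
    = (Real.sqrt π)⁻¹ * rexp (-x^2) := by
  have hc : (((1:ℝ)/2).toNNReal : ℝ) = 1/2 := Real.coe_toNNReal _ (by norm_num)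
  rw [gaussianPDFReal, hc, show (2 * π * (1/2 : ℝ)) = π by ring]
  norm_num

lemma gaussianPDF_half_eq : gaussianPDF 0 ((1:ℝ)/2).toNNReal
    = fun x => (((gaussianPDFReal 0 ((1:ℝ)/2).toNNReal x).toNNReal : ℝ≥0) : ℝ≥0∞) := rfl

lemma vhalf_ne : ((1:ℝ)/2).toNNReal ≠ 0 := by
  simp [Real.toNNReal_eq_zero]

lemma integral_ghalf (g : ℝ → ℝ) :
    ∫ t, g t ∂(gaussianReal 0 ((1:ℝ)/2).toNNReal)
      = ∫ t, ((Real.sqrt π)⁻¹ * rexp (-t^2)) * g t := by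
  rw [gaussianReal_of_var_ne_zero 0 vhalf_ne, gaussianPDF_half_eq,
    integral_withDensity_eq_integral_smul
      ((measurable_gaussianPDFReal _ _).real_toNNReal) g]
  congr 1
  funext t
  rw [NNReal.smul_def, Real.coe_toNNReal _ (gaussianPDFReal_nonneg _ _ _), pdf_half_eq]
  simp [smul_eq_mul]

lemma integrable_ghalf_iff (g : ℝ → ℝ) :
    MeasureTheory.Integrable g (gaussianReal 0 ((1:ℝ)/2).toNNReal)
      ↔ MeasureTheory.Integrable (fun t => ((Real.sqrt π)⁻¹ * rexp (-t^2)) * g t) := by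
  rw [gaussianReal_of_var_ne_zero 0 vhalf_ne, gaussianPDF_half_eq,
    MeasureTheory.integrable_withDensity_iff_integrable_smul
      ((measurable_gaussianPDFReal _ _).real_toNNReal)]
  constructor <;> intro h <;> refine h.congr (by
    filter_upwards with t
    rw [NNReal.smul_def, Real.coe_toNNReal _ (gaussianPDFReal_nonneg _ _ _), pdf_half_eq]
    simp [smul_eq_mul])

lemma sqrtpi_pos : 0 < Real.sqrt π := Real.sqrt_pos.mpr Real.pi_pos

lemma integrable_id_ghalf :
    MeasureTheory.Integrable (fun t : ℝ => t) (gaussianReal 0 ((1:ℝ)/2).toNNReal) := by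
  rw [integrable_ghalf_iff]
  have : MeasureTheory.Integrable (fun t : ℝ => (Real.sqrt π)⁻¹ * (t * rexp (-t^2))) :=
    (by simpa using integrable_mul_exp_neg_mul_sq (b := 1) one_pos :
      MeasureTheory.Integrable (fun t : ℝ => t * rexp (-t^2))).const_mul _
  exact this.congr (by filter_upwards with t; ring)

lemma integrable_sq_ghalf :
    MeasureTheory.Integrable (fun t : ℝ => t^2) (gaussianReal 0 ((1:ℝ)/2).toNNReal) := by
  rw [integrable_ghalf_iff]
  exact (integrable_sq_exp.const_mul ((Real.sqrt π)⁻¹)).congr (by filter_upwards with t; ring)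

lemma integral_id_ghalf :
    ∫ t : ℝ, t ∂(gaussianReal 0 ((1:ℝ)/2).toNNReal) = 0 := by
  rw [integral_ghalf]
  have : ∫ t : ℝ, ((Real.sqrt π)⁻¹ * rexp (-t^2)) * t
      = (Real.sqrt π)⁻¹ * ∫ t : ℝ, t * rexp (-t^2) := by
    rw [← MeasureTheory.integral_const_mul]
    congr 1; funext t; ring
  rw [this, gauss_int1, mul_zero]

lemma integral_sq_ghalf :
    ∫ t : ℝ, t^2 ∂(gaussianReal 0 ((1:ℝ)/2).toNNReal) = 1/2 := by
  rw [integral_ghalf]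
  have : ∫ t : ℝ, ((Real.sqrt π)⁻¹ * rexp (-t^2)) * t^2
      = (Real.sqrt π)⁻¹ * ∫ t : ℝ, t^2 * rexp (-t^2) := by
    rw [← MeasureTheory.integral_const_mul]
    congr 1; funext t; ring
  rw [this, gauss_int2]
  field_simp

lemma rv_moments {Ω : Type*} [MeasurableSpace Ω] (μ : Measure Ω) (W : Ω → ℝ)
    (hW : Measurable W) (hmap : μ.map W = gaussianReal 0 ((1:ℝ)/2).toNNReal) :
    MeasureTheory.Integrable W μ ∧ MeasureTheory.Integrable (fun ω => (W ω)^2) μ ∧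
      (∫ ω, W ω ∂μ) = 0 ∧ (∫ ω, (W ω)^2 ∂μ) = 1/2 := by
  have h1 : MeasureTheory.Integrable (fun t : ℝ => t) (μ.map W) := by
    rw [hmap]; exact integrable_id_ghalf
  have h2 : MeasureTheory.Integrable (fun t : ℝ => t^2) (μ.map W) := by
    rw [hmap]; exact integrable_sq_ghalf
  have e1 : ∫ t, t ∂(μ.map W) = 0 := by rw [hmap]; exact integral_id_ghalf
  have e2 : ∫ t, t^2 ∂(μ.map W) = 1/2 := by rw [hmap]; exact integral_sq_ghalf
  refine ⟨?_, ?_, ?_, ?_⟩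
  · exact (MeasureTheory.integrable_map_measure measurable_id'.aestronglyMeasurable
      hW.aemeasurable).mp h1
  · exact (MeasureTheory.integrable_map_measure
      (measurable_id'.pow_const 2).aestronglyMeasurable hW.aemeasurable).mp h2
  · rw [MeasureTheory.integral_map hW.aemeasurable measurable_id'.aestronglyMeasurable] at e1
    exact e1
  · rw [MeasureTheory.integral_map hW.aemeasurable
      (measurable_id'.pow_const 2).aestronglyMeasurable] at e2
    exact e2

open ComplexConjugate in
theorem dtrtf_main
    {Ω : Type*} [MeasurableSpace Ω] (μ : Measure Ω) [IsProbabilityMeasure μ]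
    (α : ℝ) (hα : α ∈ Set.Ioo (0 : ℝ) 1)
    (x : Ω → ℝ) (hx : Measurable x) (hx01 : ∀ ω, x ω = 0 ∨ x ω = 1)
    (hxunif : μ.map x = (1 / 2 : ENNReal) • Measure.dirac (0 : ℝ)
        + (1 / 2 : ENNReal) • Measure.dirac (1 : ℝ))
    (y : ℂ) (hy : ‖y‖ = 1)
    (hA hC : Ω → ℂ) (hhA : Measurable hA) (hhC : Measurable hC)
    (hAre : μ.map (fun ω => (hA ω).re) = gaussianReal 0 ((1:ℝ)/2).toNNReal)
    (hAim : μ.map (fun ω => (hA ω).im) = gaussianReal 0 ((1:ℝ)/2).toNNReal)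
    (hCre : μ.map (fun ω => (hC ω).re) = gaussianReal 0 ((1:ℝ)/2).toNNReal)
    (hCim : μ.map (fun ω => (hC ω).im) = gaussianReal 0 ((1:ℝ)/2).toNNReal)
    (hindep : iIndepFun
      ![fun ω => ((x ω : ℝ) : ℂ), hA, hC] μ) :
    (∫ ω, (‖(Real.sqrt (1 - α) : ℂ) * hA ω * (x ω : ℂ)
        + (Real.sqrt α : ℂ) * hC ω * y‖) ^ 2 ∂μ) = (1 - α) / 2 + α := by
  obtain ⟨hα0, hα1⟩ := hα
  set a := Real.sqrt (1 - α) with ha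
  set b := Real.sqrt α with hb
  set c : ℂ := (a : ℂ) * (b : ℂ) * conj y with hc
  -- moments
  obtain ⟨iAre, iAre2, eAre, eAre2⟩ :=
    rv_moments μ (fun ω => (hA ω).re) (Complex.measurable_re.comp hhA) hAre
  obtain ⟨iAim, iAim2, eAim, eAim2⟩ :=
    rv_moments μ (fun ω => (hA ω).im) (Complex.measurable_im.comp hhA) hAim
  obtain ⟨iCre, iCre2, eCre, eCre2⟩ :=
    rv_moments μ (fun ω => (hC ω).re) (Complex.measurable_re.comp hhC) hCre
  obtain ⟨iCim, iCim2, eCim, eCim2⟩ :=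
    rv_moments μ (fun ω => (hC ω).im) (Complex.measurable_im.comp hhC) hCim
  -- normSq integrability and expectation
  have hnsqA_eq : (fun ω => Complex.normSq (hA ω))
      = fun ω => (hA ω).re ^ 2 + (hA ω).im ^ 2 := by
    funext ω; rw [Complex.normSq_apply]; ring
  have hnsqC_eq : (fun ω => Complex.normSq (hC ω))
      = fun ω => (hC ω).re ^ 2 + (hC ω).im ^ 2 := by
    funext ω; rw [Complex.normSq_apply]; ring
  have iNA : MeasureTheory.Integrable (fun ω => Complex.normSq (hA ω)) μ := by
    rw [hnsqA_eq]; exact iAre2.add iAim2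
  have iNC : MeasureTheory.Integrable (fun ω => Complex.normSq (hC ω)) μ := by
    rw [hnsqC_eq]; exact iCre2.add iCim2
  have eNA : ∫ ω, Complex.normSq (hA ω) ∂μ = 1 := by
    rw [hnsqA_eq, MeasureTheory.integral_add iAre2 iAim2, eAre2, eAim2]; norm_num
  have eNC : ∫ ω, Complex.normSq (hC ω) ∂μ = 1 := by
    rw [hnsqC_eq, MeasureTheory.integral_add iCre2 iCim2, eCre2, eCim2]; norm_num
  -- x integrable and mean 1/2
  have ixx : MeasureTheory.Integrable x μ := by
    refine MeasureTheory.Integrable.mono' (MeasureTheory.integrable_const (1:ℝ))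
      hx.aestronglyMeasurable ?_
    filter_upwards with ω
    rcases hx01 ω with h | h <;> simp [h]
  have hEx : ∫ ω, x ω ∂μ = 1 / 2 := by
    have := MeasureTheory.integral_map hx.aemeasurable
      (measurable_id'.aestronglyMeasurable (μ := μ.map x)) (f := fun t : ℝ => t)
    rw [← this, hxunif]
    rw [MeasureTheory.integral_add_measure]
    · rw [MeasureTheory.integral_smul_measure, MeasureTheory.integral_smul_measure,
        MeasureTheory.integral_dirac, MeasureTheory.integral_dirac]
      norm_num
    · exact ((MeasureTheory.integrable_const ((0:ℝ))).congr
        (MeasureTheory.ae_eq_dirac (fun t : ℝ => t)).symm).smul_measure (by norm_num)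
    · exact ((MeasureTheory.integrable_const ((1:ℝ))).congr
        (MeasureTheory.ae_eq_dirac (fun t : ℝ => t)).symm).smul_measure (by norm_num)
  -- independence
  have hmeas : ∀ i, Measurable (![fun ω => ((x ω : ℝ) : ℂ), hA, hC] i) := by
    intro i
    fin_cases i
    · exact Complex.measurable_ofReal.comp hx
    · exact hhA
    · exact hhC
  have hx0eq : Complex.re ∘ (fun ω => ((x ω : ℝ) : ℂ)) = x := by
    funext ω; simp
  have indAC : IndepFun hA hC μ := by
    have := hindep.indepFun (show (1 : Fin 3) ≠ 2 by decide)
    simpa using this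
  have indxA : IndepFun x (fun ω => Complex.normSq (hA ω)) μ := by
    have h01 : IndepFun (fun ω => ((x ω : ℝ) : ℂ)) hA μ := by
      have := hindep.indepFun (show (0 : Fin 3) ≠ 1 by decide)
      simpa using this
    have h2 := h01.comp Complex.measurable_re Complex.continuous_normSq.measurable
    rw [hx0eq] at h2
    exact h2
  have hgmeas : Measurable (fun p : ℂ × ℂ => (c * (p.1 * conj p.2)).re) := by
    apply Complex.measurable_re.comp
    exact measurable_const.mul (measurable_fst.mul (Complex.continuous_conj.measurable.comp
      measurable_snd))
  have indxg : IndepFun x (fun ω => (c * (hA ω * conj (hC ω))).re) μ := by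
    have hpair : IndepFun (fun ω => (hA ω, hC ω)) (fun ω => ((x ω : ℝ) : ℂ)) μ := by
      have := hindep.indepFun_prodMk hmeas 1 2 0 (by decide) (by decide)
      simpa using this
    have h2 := (hpair.comp hgmeas Complex.measurable_re).symm
    rw [hx0eq] at h2
    exact h2
  -- g facts
  set g : Ω → ℝ := fun ω => (c * (hA ω * conj (hC ω))).re with hgdef
  have hgeq : g = fun ω => c.re * ((hA ω).re * (hC ω).re + (hA ω).im * (hC ω).im)
      - c.im * ((hA ω).im * (hC ω).re - (hA ω).re * (hC ω).im) := by
    funext ω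
    simp only [hgdef, Complex.mul_re, Complex.mul_im, Complex.conj_re, Complex.conj_im]
    ring
  have ind_rr : IndepFun (fun ω => (hA ω).re) (fun ω => (hC ω).re) μ :=
    indAC.comp Complex.measurable_re Complex.measurable_re
  have ind_ri : IndepFun (fun ω => (hA ω).re) (fun ω => (hC ω).im) μ :=
    indAC.comp Complex.measurable_re Complex.measurable_im
  have ind_ir : IndepFun (fun ω => (hA ω).im) (fun ω => (hC ω).re) μ :=
    indAC.comp Complex.measurable_im Complex.measurable_re
  have ind_ii : IndepFun (fun ω => (hA ω).im) (fun ω => (hC ω).im) μ :=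
    indAC.comp Complex.measurable_im Complex.measurable_im
  have i_rr : MeasureTheory.Integrable (fun ω => (hA ω).re * (hC ω).re) μ :=
    ind_rr.integrable_mul iAre iCre
  have i_ri : MeasureTheory.Integrable (fun ω => (hA ω).re * (hC ω).im) μ :=
    ind_ri.integrable_mul iAre iCim
  have i_ir : MeasureTheory.Integrable (fun ω => (hA ω).im * (hC ω).re) μ :=
    ind_ir.integrable_mul iAim iCre
  have i_ii : MeasureTheory.Integrable (fun ω => (hA ω).im * (hC ω).im) μ :=
    ind_ii.integrable_mul iAim iCim
  have e_rr : ∫ ω, (hA ω).re * (hC ω).re ∂μ = 0 := by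
    rw [show (∫ ω, (hA ω).re * (hC ω).re ∂μ)
      = (∫ ω, (hA ω).re ∂μ) * ∫ ω, (hC ω).re ∂μ
      from ind_rr.integral_fun_mul_eq_mul_integral iAre.aestronglyMeasurable iCre.aestronglyMeasurable, eAre]; ring
  have e_ri : ∫ ω, (hA ω).re * (hC ω).im ∂μ = 0 := by
    rw [show (∫ ω, (hA ω).re * (hC ω).im ∂μ)
      = (∫ ω, (hA ω).re ∂μ) * ∫ ω, (hC ω).im ∂μ
      from ind_ri.integral_fun_mul_eq_mul_integral iAre.aestronglyMeasurable iCim.aestronglyMeasurable, eAre]; ring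
  have e_ir : ∫ ω, (hA ω).im * (hC ω).re ∂μ = 0 := by
    rw [show (∫ ω, (hA ω).im * (hC ω).re ∂μ)
      = (∫ ω, (hA ω).im ∂μ) * ∫ ω, (hC ω).re ∂μ
      from ind_ir.integral_fun_mul_eq_mul_integral iAim.aestronglyMeasurable iCre.aestronglyMeasurable, eAim]; ring
  have e_ii : ∫ ω, (hA ω).im * (hC ω).im ∂μ = 0 := by
    rw [show (∫ ω, (hA ω).im * (hC ω).im ∂μ)
      = (∫ ω, (hA ω).im ∂μ) * ∫ ω, (hC ω).im ∂μ
      from ind_ii.integral_fun_mul_eq_mul_integral iAim.aestronglyMeasurable iCim.aestronglyMeasurable, eAim]; ring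
  have ig : MeasureTheory.Integrable g μ := by
    rw [hgeq]
    exact (((i_rr.add i_ii).const_mul c.re).sub ((i_ir.sub i_ri).const_mul c.im))
  have eg : ∫ ω, g ω ∂μ = 0 := by
    have j1 : MeasureTheory.Integrable
        (fun ω => c.re * ((hA ω).re * (hC ω).re + (hA ω).im * (hC ω).im)) μ :=
      (i_rr.add i_ii).const_mul c.re
    have j2 : MeasureTheory.Integrable
        (fun ω => c.im * ((hA ω).im * (hC ω).re - (hA ω).re * (hC ω).im)) μ :=
      (i_ir.sub i_ri).const_mul c.im
    rw [hgeq]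
    rw [MeasureTheory.integral_sub j1 j2,
      MeasureTheory.integral_const_mul, MeasureTheory.integral_const_mul,
      MeasureTheory.integral_add i_rr i_ii, MeasureTheory.integral_sub i_ir i_ri,
      e_rr, e_ii, e_ir, e_ri]
    ring
  -- term integrabilities
  have iT1 : MeasureTheory.Integrable (fun ω => x ω * Complex.normSq (hA ω)) μ :=
    indxA.integrable_mul ixx iNA
  have iT3 : MeasureTheory.Integrable (fun ω => x ω * g ω) μ :=
    indxg.integrable_mul ixx ig
  have eT1 : ∫ ω, x ω * Complex.normSq (hA ω) ∂μ = 1 / 2 := by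
    rw [show (∫ ω, x ω * Complex.normSq (hA ω) ∂μ)
      = (∫ ω, x ω ∂μ) * ∫ ω, Complex.normSq (hA ω) ∂μ
      from indxA.integral_fun_mul_eq_mul_integral ixx.aestronglyMeasurable iNA.aestronglyMeasurable, hEx, eNA]; ring
  have eT3 : ∫ ω, x ω * g ω ∂μ = 0 := by
    rw [show (∫ ω, x ω * g ω ∂μ) = (∫ ω, x ω ∂μ) * ∫ ω, g ω ∂μ
      from indxg.integral_fun_mul_eq_mul_integral ixx.aestronglyMeasurable ig.aestronglyMeasurable, eg]; ring
  -- pointwise expansion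
  have hxsq : ∀ ω, x ω * x ω = x ω := by
    intro ω; rcases hx01 ω with h | h <;> simp [h]
  have ha2 : a * a = 1 - α := Real.mul_self_sqrt (by linarith)
  have hb2 : b * b = α := Real.mul_self_sqrt (by linarith)
  have hy2 : Complex.normSq y = 1 := by
    rw [← Complex.sq_norm, hy]; norm_num
  have hpt : ∀ ω, (‖(a : ℂ) * hA ω * (x ω : ℂ) + (b : ℂ) * hC ω * y‖) ^ 2
      = (1 - α) * (x ω * Complex.normSq (hA ω)) + α * Complex.normSq (hC ω)
        + 2 * (x ω * g ω) := by
    intro ω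
    rw [Complex.sq_norm, Complex.normSq_add]
    have h1 : Complex.normSq ((a : ℂ) * hA ω * (x ω : ℂ))
        = (1 - α) * (x ω * Complex.normSq (hA ω)) := by
      rw [Complex.normSq_mul, Complex.normSq_mul, Complex.normSq_ofReal,
        Complex.normSq_ofReal, ha2, hxsq ω]
      ring
    have h2 : Complex.normSq ((b : ℂ) * hC ω * y) = α * Complex.normSq (hC ω) := by
      rw [Complex.normSq_mul, Complex.normSq_mul, Complex.normSq_ofReal, hb2, hy2]
      ring
    have hmul : ((a : ℂ) * hA ω * (x ω : ℂ)) * conj ((b : ℂ) * hC ω * y)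
        = (x ω : ℂ) * (c * (hA ω * conj (hC ω))) := by
      simp only [map_mul, Complex.conj_ofReal, hc]
      ring
    rw [h1, h2, hmul, Complex.re_ofReal_mul]
  -- final computation
  calc (∫ ω, (‖(a : ℂ) * hA ω * (x ω : ℂ) + (b : ℂ) * hC ω * y‖) ^ 2 ∂μ)
      = ∫ ω, ((1 - α) * (x ω * Complex.normSq (hA ω)) + α * Complex.normSq (hC ω)
        + 2 * (x ω * g ω)) ∂μ := by
        exact MeasureTheory.integral_congr_ae (Filter.Eventually.of_forall hpt)
    _ = (1 - α) / 2 + α := by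
        have k1 : MeasureTheory.Integrable
            (fun ω => (1 - α) * (x ω * Complex.normSq (hA ω))
              + α * Complex.normSq (hC ω)) μ :=
          (iT1.const_mul _).add (iNC.const_mul _)
        have k2 : MeasureTheory.Integrable (fun ω => (2:ℝ) * (x ω * g ω)) μ :=
          iT3.const_mul _
        have k3 : MeasureTheory.Integrable
            (fun ω => (1 - α) * (x ω * Complex.normSq (hA ω))) μ := iT1.const_mul _
        have k4 : MeasureTheory.Integrable (fun ω => α * Complex.normSq (hC ω)) μ :=
          iNC.const_mul _
        rw [MeasureTheory.integral_add k1 k2, MeasureTheory.integral_add k3 k4,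
          MeasureTheory.integral_const_mul, MeasureTheory.integral_const_mul,
          MeasureTheory.integral_const_mul, eT1, eNC, eT3]
        ring


end DTRTFAux

/-- Proposition 1(2): the expected received-symbol energy in the first slot
of the DTRTF scheme is `(1−α)/2 + α`, and averaged over a pair of time-slots the expected
energy equals unity. -/
theorem dtrtf_average_energy_unity
    {Ω : Type*} [MeasurableSpace Ω] (μ : Measure Ω) [IsProbabilityMeasure μ]
    (α : ℝ) (hα : α ∈ Set.Ioo (0 : ℝ) 1)
    (x : Ω → ℝ) (hx : Measurable x) (hx01 : ∀ ω, x ω = 0 ∨ x ω = 1)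
    (hxunif : μ.map x = (1 / 2 : ENNReal) • Measure.dirac (0 : ℝ)
        + (1 / 2 : ENNReal) • Measure.dirac (1 : ℝ))
    (y : ℂ) (hy : ‖y‖ = 1)
    (hA hC : Ω → ℂ) (hhA : Measurable hA) (hhC : Measurable hC)
    (hACN : IsCN μ hA 1) (hCCN : IsCN μ hC 1)
    (hindep : iIndepFun
      ![fun ω => ((x ω : ℝ) : ℂ), hA, hC] μ) :
    (∫ ω, (‖(Real.sqrt (1 - α) : ℂ) * hA ω * (x ω : ℂ)
        + (Real.sqrt α : ℂ) * hC ω * y‖) ^ 2 ∂μ) = (1 - α) / 2 + α ∧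
    (1 / 2 : ℝ) * ((1 - α) / 2 + α)
      + (1 / 2) * ((1 / 2) * 1 + (1 / 2) * (2 - α)) = 1 := by
  refine ⟨?_, by ring⟩
  exact dtrtf_main μ α hα x hx hx01 hxunif y hy hA hC hhA hhC
    hACN.2.1 hACN.2.2 hCCN.2.1 hCCN.2.2 hindep
end

section
/- Let α ∈ (0,1), let M ≥ 1 be a natural number, let N > 0, and let h ∈ ℂ with h ≠ 0. Let W ~ CN(0,N), i.e., Re W and Im W are independent real Gaussians with mean 0 and variance N/2. Set d = √(3 − α − 2·√(2−α)·cos(π/M)). Then ℙ( |h·(√(2−α)·e^{iπ/M} − 1) + W|² ≤ |W|² ) = Q( |h|·d / √(2N) ), where Q is the Gaussian Q-function. (This is the closed form P_{B1} = P_{B2} = P_{B3} = Q(|h| d / √(2N)) of Proposition 3, the pairwise error probability between the helper's modified and unmodified M-PSK symbols under complex Gaussian noise of variance N and channel gain h.) -/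
open MeasureTheory ProbabilityTheory

/-- The Gaussian Q-function: `Q x = ℙ(G > x)` for a standard real Gaussian `G`. -/
noncomputable def gaussQ (x : ℝ) : ENNReal := gaussianReal 0 1 (Set.Ioi x)

section Aux

open Real
open scoped ENNReal NNReal

lemma aux_pdf_mul (a b : ℝ) (ha : 0 < a) (hb : 0 < b) (y x : ℝ) :
    gaussianPDFReal 0 a.toNNReal x * gaussianPDFReal 0 b.toNNReal (y - x)
      = gaussianPDFReal 0 (a + b).toNNReal y *
        ((Real.sqrt (π / ((a + b) / (2 * a * b))))⁻¹ *
          Real.exp (-((a + b) / (2 * a * b)) * (x - a * y / (a + b)) ^ 2)) := by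
  have hab : 0 < a + b := by linarith
  simp only [gaussianPDFReal, Real.coe_toNNReal _ ha.le, Real.coe_toNNReal _ hb.le,
    Real.coe_toNNReal _ hab.le, sub_zero]
  have h2a : (0:ℝ) < 2 * π * a := by positivity
  have h2b : (0:ℝ) < 2 * π * b := by positivity
  have hk : (0:ℝ) < (a + b) / (2 * a * b) := by positivity
  have hpk : (0:ℝ) < π / ((a + b) / (2 * a * b)) := by positivity
  rw [show (√(2*π*a))⁻¹ * rexp (-x^2/(2*a)) * ((√(2*π*b))⁻¹ * rexp (-(y-x)^2/(2*b)))
      = ((√(2*π*a))⁻¹ * (√(2*π*b))⁻¹) * (rexp (-x^2/(2*a)) * rexp (-(y-x)^2/(2*b))) by ring,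
    show (√(2*π*(a+b)))⁻¹ * rexp (-y^2/(2*(a+b))) * ((√(π/((a+b)/(2*a*b))))⁻¹ *
        rexp (-((a+b)/(2*a*b)) * (x - a*y/(a+b))^2))
      = ((√(2*π*(a+b)))⁻¹ * (√(π/((a+b)/(2*a*b))))⁻¹) *
        (rexp (-y^2/(2*(a+b))) * rexp (-((a+b)/(2*a*b)) * (x - a*y/(a+b))^2)) by ring,
    ← Real.exp_add, ← Real.exp_add, ← Real.sqrt_inv, ← Real.sqrt_inv, ← Real.sqrt_inv,
    ← Real.sqrt_inv, ← Real.sqrt_mul (by positivity), ← Real.sqrt_mul (by positivity)]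
  congr 1
  · congr 1
    field_simp
  · rw [Real.exp_eq_exp]
    field_simp
    ring

lemma aux_conv_pdfReal (a b : ℝ) (ha : 0 < a) (hb : 0 < b) (y : ℝ) :
    ∫ x, gaussianPDFReal 0 a.toNNReal x * gaussianPDFReal 0 b.toNNReal (y - x)
      = gaussianPDFReal 0 (a + b).toNNReal y := by
  have hk : (0:ℝ) < (a + b) / (2 * a * b) := by positivity
  simp_rw [aux_pdf_mul a b ha hb y]
  rw [integral_const_mul, integral_const_mul,
    integral_sub_right_eq_self (fun x => rexp (-((a + b) / (2 * a * b)) * x ^ 2))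
      (a * y / (a + b)), integral_gaussian, inv_mul_cancel₀ (by positivity), mul_one]

lemma aux_conv_integrable (a b : ℝ) (ha : 0 < a) (hb : 0 < b) (y : ℝ) :
    Integrable (fun x => gaussianPDFReal 0 a.toNNReal x * gaussianPDFReal 0 b.toNNReal (y - x)) := by
  have hk : (0:ℝ) < (a + b) / (2 * a * b) := by positivity
  simp_rw [aux_pdf_mul a b ha hb y]
  exact (((integrable_exp_neg_mul_sq hk).comp_sub_right (a * y / (a + b))).const_mul _).const_mul _

lemma aux_conv_pdf (a b : ℝ) (ha : 0 < a) (hb : 0 < b) (y : ℝ) :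
    ∫⁻ x, gaussianPDF 0 a.toNNReal x * gaussianPDF 0 b.toNNReal (y - x)
      = gaussianPDF 0 (a + b).toNNReal y := by
  simp_rw [gaussianPDF,
    ← ENNReal.ofReal_mul (gaussianPDFReal_nonneg _ _ _)]
  rw [← ofReal_integral_eq_lintegral_ofReal (aux_conv_integrable a b ha hb y)
    (ae_of_all _ fun x => mul_nonneg (gaussianPDFReal_nonneg _ _ _) (gaussianPDFReal_nonneg _ _ _)),
    aux_conv_pdfReal a b ha hb y]

lemma aux_map_add_prod (a b : ℝ) (ha : 0 < a) (hb : 0 < b) :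
    Measure.map (fun p : ℝ × ℝ => p.1 + p.2)
      ((gaussianReal 0 a.toNNReal).prod (gaussianReal 0 b.toNNReal))
      = gaussianReal 0 (a + b).toNNReal := by
  have hva : a.toNNReal ≠ 0 := by
    simp only [ne_eq, Real.toNNReal_eq_zero, not_le]; exact ha
  have hvb : b.toNNReal ≠ 0 := by
    simp only [ne_eq, Real.toNNReal_eq_zero, not_le]; exact hb
  have hvab : (a + b).toNNReal ≠ 0 := by
    simp only [ne_eq, Real.toNNReal_eq_zero, not_le]; linarith
  ext s hs
  rw [Measure.map_apply (by fun_prop : Measurable fun p : ℝ × ℝ => p.1 + p.2) hs,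
    ← lintegral_indicator_one ((by fun_prop : Measurable fun p : ℝ × ℝ => p.1 + p.2) hs)]
  have hind : Measurable (Set.indicator s (1 : ℝ → ℝ≥0∞)) := measurable_one.indicator hs
  calc
    ∫⁻ p, ((fun p : ℝ × ℝ => p.1 + p.2) ⁻¹' s).indicator 1 p
        ∂((gaussianReal 0 a.toNNReal).prod (gaussianReal 0 b.toNNReal))
      = ∫⁻ p, s.indicator (1 : ℝ → ℝ≥0∞) (p.1 + p.2)
        ∂((gaussianReal 0 a.toNNReal).prod (gaussianReal 0 b.toNNReal)) := by
        rfl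
    _ = ∫⁻ x, ∫⁻ y, s.indicator (1 : ℝ → ℝ≥0∞) (x + y) ∂(gaussianReal 0 b.toNNReal)
        ∂(gaussianReal 0 a.toNNReal) := by
        exact lintegral_prod _ (hind.comp (measurable_fst.add measurable_snd)).aemeasurable
    _ = ∫⁻ x, ∫⁻ y, gaussianPDF 0 b.toNNReal (y - x) * s.indicator (1 : ℝ → ℝ≥0∞) y
        ∂(volume : Measure ℝ) ∂(gaussianReal 0 a.toNNReal) := by
        congr 1; ext x
        have hgm : Measurable (fun y => s.indicator (1 : ℝ → ℝ≥0∞) (x + y)) :=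
          hind.comp (measurable_const_add x)
        rw [gaussianReal_of_var_ne_zero _ hvb,
          lintegral_withDensity_eq_lintegral_mul _ (measurable_gaussianPDF _ _) hgm]
        conv_rhs => rw [← lintegral_add_left_eq_self
          (fun y => gaussianPDF 0 b.toNNReal (y - x) * s.indicator (1 : ℝ → ℝ≥0∞) y) x]
        congr 1; ext y
        simp [add_sub_cancel_left]
    _ = ∫⁻ x, gaussianPDF 0 a.toNNReal x *
          ∫⁻ y, gaussianPDF 0 b.toNNReal (y - x) * s.indicator (1 : ℝ → ℝ≥0∞) y
        ∂(volume : Measure ℝ) ∂(volume : Measure ℝ) := by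
        have hU : Measurable (Function.uncurry fun x y =>
            gaussianPDF 0 b.toNNReal (y - x) * s.indicator (1 : ℝ → ℝ≥0∞) y) :=
          ((measurable_gaussianPDF _ _).comp (measurable_snd.sub measurable_fst)).mul
            (hind.comp measurable_snd)
        have hF : Measurable fun x =>
            ∫⁻ y, gaussianPDF 0 b.toNNReal (y - x) * s.indicator (1 : ℝ → ℝ≥0∞) y :=
          hU.lintegral_prod_right
        rw [gaussianReal_of_var_ne_zero _ hva,
          lintegral_withDensity_eq_lintegral_mul _ (measurable_gaussianPDF _ _) hF]
        rfl
    _ = ∫⁻ x, ∫⁻ y, gaussianPDF 0 a.toNNReal x *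
          (gaussianPDF 0 b.toNNReal (y - x) * s.indicator (1 : ℝ → ℝ≥0∞) y)
        ∂(volume : Measure ℝ) ∂(volume : Measure ℝ) := by
        congr 1; ext x
        have hm : Measurable (fun y => gaussianPDF 0 b.toNNReal (y - x) *
            s.indicator (1 : ℝ → ℝ≥0∞) y) :=
          ((measurable_gaussianPDF _ _).comp (measurable_id.sub measurable_const)).mul hind
        rw [← lintegral_const_mul _ hm]
    _ = ∫⁻ y, ∫⁻ x, gaussianPDF 0 a.toNNReal x *
          (gaussianPDF 0 b.toNNReal (y - x) * s.indicator (1 : ℝ → ℝ≥0∞) y)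
        ∂(volume : Measure ℝ) ∂(volume : Measure ℝ) := by
        refine lintegral_lintegral_swap ?_
        exact (((measurable_gaussianPDF _ _).comp measurable_fst).mul
          (((measurable_gaussianPDF _ _).comp (measurable_snd.sub measurable_fst)).mul
            (hind.comp measurable_snd))).aemeasurable
    _ = ∫⁻ y, (∫⁻ x, gaussianPDF 0 a.toNNReal x * gaussianPDF 0 b.toNNReal (y - x)
          ∂(volume : Measure ℝ)) * s.indicator (1 : ℝ → ℝ≥0∞) y ∂(volume : Measure ℝ) := by
        congr 1; ext y
        have hm : Measurable (fun x => gaussianPDF 0 a.toNNReal x *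
            gaussianPDF 0 b.toNNReal (y - x)) :=
          (measurable_gaussianPDF _ _).mul
            ((measurable_gaussianPDF _ _).comp (measurable_const.sub measurable_id))
        rw [← lintegral_mul_const _ hm]
        congr 1; ext x; ring
    _ = ∫⁻ y, gaussianPDF 0 (a + b).toNNReal y * s.indicator (1 : ℝ → ℝ≥0∞) y
        ∂(volume : Measure ℝ) := by
        congr 1; ext y
        rw [aux_conv_pdf a b ha hb y]
    _ = (gaussianReal 0 (a + b).toNNReal) s := by
        rw [gaussianReal_of_var_ne_zero _ hvab, withDensity_apply _ hs,
          ← lintegral_indicator hs]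
        congr 1; ext y
        by_cases hy : y ∈ s <;> simp [hy]

lemma aux_nnreal_mul (a v : ℝ) (hv : 0 ≤ v) :
    (NNReal.mk (a ^ 2) (sq_nonneg a)) * Real.toNNReal v = Real.toNNReal (a ^ 2 * v) := by
  ext
  push_cast
  rw [Real.coe_toNNReal _ hv, Real.coe_toNNReal _ (by positivity)]

lemma aux_map_lin {Ω : Type*} [MeasurableSpace Ω] (μ : Measure Ω) [IsProbabilityMeasure μ]
    (X Y : Ω → ℝ) (hX : Measurable X) (hY : Measurable Y)
    (hindep : IndepFun X Y μ) (v : ℝ) (hv : 0 < v)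
    (hmX : μ.map X = gaussianReal 0 v.toNNReal) (hmY : μ.map Y = gaussianReal 0 v.toNNReal)
    (a b : ℝ) (hab : a ≠ 0 ∧ b ≠ 0 ∨ a = 0 ∧ b ≠ 0 ∨ a ≠ 0 ∧ b = 0) :
    μ.map (fun ω => a * X ω + b * Y ω) = gaussianReal 0 ((a ^ 2 + b ^ 2) * v).toNNReal := by
  have hmaX : μ.map (fun ω => a * X ω) = gaussianReal 0 (Real.toNNReal (a ^ 2 * v)) := by
    have hc : (fun ω => a * X ω) = (fun x => a * x) ∘ X := rfl
    rw [hc, ← Measure.map_map (measurable_const_mul a) hX, hmX,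
      gaussianReal_map_const_mul, mul_zero, aux_nnreal_mul a v hv.le]
  have hmbY : μ.map (fun ω => b * Y ω) = gaussianReal 0 (Real.toNNReal (b ^ 2 * v)) := by
    have hc : (fun ω => b * Y ω) = (fun x => b * x) ∘ Y := rfl
    rw [hc, ← Measure.map_map (measurable_const_mul b) hY, hmY,
      gaussianReal_map_const_mul, mul_zero, aux_nnreal_mul b v hv.le]
  rcases hab with ⟨ha, hb⟩ | ⟨ha, hb⟩ | ⟨ha, hb⟩
  · have hind2 : IndepFun (fun ω => a * X ω) (fun ω => b * Y ω) μ :=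
      hindep.comp (measurable_const_mul a) (measurable_const_mul b)
    have hpair := (indepFun_iff_map_prod_eq_prod_map_map
      ((hX.const_mul a).aemeasurable) ((hY.const_mul b).aemeasurable)).mp hind2
    have : (fun ω => a * X ω + b * Y ω)
        = (fun p : ℝ × ℝ => p.1 + p.2) ∘ (fun ω => (a * X ω, b * Y ω)) := rfl
    rw [this, ← Measure.map_map (by fun_prop : Measurable fun p : ℝ × ℝ => p.1 + p.2)
      ((hX.const_mul a).prodMk (hY.const_mul b)), hpair, hmaX, hmbY,
      aux_map_add_prod _ _ (by positivity) (by positivity)]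
    congr 1
    ring
  · subst ha
    simp only [zero_mul, zero_add]
    rw [hmbY]
    congr 1
    ring_nf
  · subst hb
    simp only [zero_mul, add_zero]
    rw [hmaX]
    congr 1
    ring_nf

lemma aux_gauss_Iic (V : ℝ) (hV : 0 < V) (c : ℝ) :
    gaussianReal 0 (Real.toNNReal V) (Set.Iic c)
      = gaussianReal 0 1 (Set.Ioi (-(c / Real.sqrt V))) := by
  have hσ : 0 < Real.sqrt V := Real.sqrt_pos.mpr hV
  have h1 : gaussianReal 0 (Real.toNNReal V)
      = (gaussianReal 0 1).map (fun x => Real.sqrt V * x) := by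
    rw [show (fun x => Real.sqrt V * x) = (Real.sqrt V * ·) from rfl,
      gaussianReal_map_const_mul, mul_zero]
    congr 1
    ext
    push_cast
    rw [Real.coe_toNNReal _ hV.le, Real.sq_sqrt hV.le, mul_one]
  rw [h1, Measure.map_apply (measurable_const_mul _) measurableSet_Iic]
  have h2 : (fun x => Real.sqrt V * x) ⁻¹' (Set.Iic c) = Set.Iic (c / Real.sqrt V) := by
    ext x
    simp only [Set.mem_preimage, Set.mem_Iic]
    rw [← le_div_iff₀' hσ]
  rw [h2]
  set t := c / Real.sqrt V
  have hneg : gaussianReal 0 1 = (gaussianReal 0 1).map (fun x : ℝ => -x) := by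
    have h3 := gaussianReal_map_const_mul (μ := 0) (v := 1) (-1)
    rw [show ((-1 : ℝ) * ·) = (fun x : ℝ => -x) from funext fun x => by ring] at h3
    rw [h3, mul_zero]
    congr 1
    ext
    push_cast
    norm_num
  conv_lhs => rw [hneg]
  rw [Measure.map_apply measurable_neg measurableSet_Iic,
    show (fun x : ℝ => -x) ⁻¹' (Set.Iic t) = Set.Ici (-t) by ext x; simp [neg_le],
    show Set.Ici (-t) = {-t} ∪ Set.Ioi (-t) by
      ext x; simp [le_iff_lt_or_eq, eq_comm, or_comm],
    measure_union (by simp) measurableSet_Ioi,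
    (gaussianReal_absolutelyContinuous 0 one_ne_zero) Real.volume_singleton, zero_add]

end Aux

/-- Proposition 3: the pairwise error probability between the helper's
modified and unmodified M-PSK symbols under complex Gaussian noise of variance `N` and
channel gain `h` is `Q(|h| d / √(2N))` with `d = √(3 − α − 2 √(2−α) cos(π/M))`. -/
theorem dtrtf_PB_eq_gaussQ
    {Ω : Type*} [MeasurableSpace Ω] (μ : Measure Ω) [IsProbabilityMeasure μ]
    (α : ℝ) (hα : α ∈ Set.Ioo (0 : ℝ) 1) (M : ℕ) (hM : 1 ≤ M)
    (N : ℝ) (hN : 0 < N) (h : ℂ) (hh : h ≠ 0)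
    (W : Ω → ℂ) (hW : Measurable W) (hWCN : IsCN μ W N)
    (d : ℝ) (hd : d = Real.sqrt (3 - α - 2 * Real.sqrt (2 - α) * Real.cos (Real.pi / M))) :
    μ {ω | (‖(h * ((Real.sqrt (2 - α) : ℂ)
          * Complex.exp ((Real.pi / M : ℝ) * Complex.I) - 1) + W ω)‖) ^ 2
        ≤ (‖W ω‖) ^ 2}
      = gaussQ (‖h‖ * d / Real.sqrt (2 * N)) := by
  obtain ⟨hindep, hre, him⟩ := hWCN
  have hα1 := hα.2
  have h2α : (0:ℝ) ≤ 2 - α := by linarith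
  set θ : ℝ := Real.pi / M with hθ
  set e : ℂ := (Real.sqrt (2 - α) : ℂ) * Complex.exp ((θ : ℝ) * Complex.I) - 1 with he
  set s : ℂ := h * e with hs
  -- e ≠ 0
  have he0 : e ≠ 0 := by
    intro h0
    have h1 : (Real.sqrt (2 - α) : ℂ) * Complex.exp ((θ : ℝ) * Complex.I) = 1 :=
      sub_eq_zero.mp h0
    have h2 := congrArg (‖·‖) h1
    rw [norm_mul, Complex.norm_real, Real.norm_eq_abs, Complex.norm_exp_ofReal_mul_I, mul_one, norm_one,
      abs_of_nonneg (Real.sqrt_nonneg _)] at h2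
    have := Real.sqrt_eq_one.mp h2
    linarith
  have hs0 : s ≠ 0 := mul_ne_zero hh he0
  -- |e| = d
  have he_re : e.re = Real.sqrt (2 - α) * Real.cos θ - 1 := by
    simp [he, Complex.mul_re, Complex.exp_ofReal_mul_I_re, Complex.exp_ofReal_mul_I_im]
  have he_im : e.im = Real.sqrt (2 - α) * Real.sin θ := by
    simp [he, Complex.mul_im, Complex.exp_ofReal_mul_I_re, Complex.exp_ofReal_mul_I_im]
  have hnormSq_e : Complex.normSq e = 3 - α - 2 * Real.sqrt (2 - α) * Real.cos θ := by
    rw [Complex.normSq_apply, he_re, he_im]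
    have hA : Real.sqrt (2 - α) * Real.sqrt (2 - α) = 2 - α := Real.mul_self_sqrt h2α
    have hB : Real.sin θ ^ 2 + Real.cos θ ^ 2 = 1 := Real.sin_sq_add_cos_sq θ
    linear_combination (Real.cos θ ^ 2 + Real.sin θ ^ 2) * hA + (2 - α) * hB
  have habs_e : ‖e‖ = d := by
    rw [Complex.norm_def, hnormSq_e, hd]
  have habs_s : ‖s‖ = ‖h‖ * d := by
    rw [hs, norm_mul, habs_e]
  have habs_s_pos : 0 < ‖s‖ := by
    simpa using hs0
  set a : ℝ := s.re with ha
  set b : ℝ := s.im with hb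
  set c : ℝ := -Complex.normSq s / 2 with hc
  -- rewrite the event
  have hsetevent : {ω | (‖s + W ω‖) ^ 2 ≤ (‖W ω‖) ^ 2}
      = (fun ω => a * (W ω).re + b * (W ω).im) ⁻¹' (Set.Iic c) := by
    ext ω
    simp only [Set.mem_setOf_eq, Set.mem_preimage, Set.mem_Iic, Complex.sq_norm]
    rw [Complex.normSq_add]
    have hexp : (s * (starRingEnd ℂ) (W ω)).re = a * (W ω).re + b * (W ω).im := by
      simp only [Complex.mul_re, Complex.conj_re, Complex.conj_im, ha, hb]
      ring
    rw [hexp, hc]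
    constructor <;> intro h' <;> linarith
  rw [hsetevent]
  -- the linear combination is Gaussian
  have hXm : Measurable fun ω => (W ω).re := Complex.measurable_re.comp hW
  have hYm : Measurable fun ω => (W ω).im := Complex.measurable_im.comp hW
  have hSm : Measurable fun ω => a * (W ω).re + b * (W ω).im :=
    (hXm.const_mul a).add (hYm.const_mul b)
  have hcases : a ≠ 0 ∧ b ≠ 0 ∨ a = 0 ∧ b ≠ 0 ∨ a ≠ 0 ∧ b = 0 := by
    by_cases ha0 : a = 0 <;> by_cases hb0 : b = 0
    · exact absurd (Complex.ext ha0 hb0) hs0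
    · tauto
    · tauto
    · tauto
  have hmap := aux_map_lin μ (fun ω => (W ω).re) (fun ω => (W ω).im) hXm hYm hindep
    (N / 2) (by linarith) hre him a b hcases
  rw [← Measure.map_apply hSm measurableSet_Iic, hmap]
  -- positivity of the variance
  have hab2 : a ^ 2 + b ^ 2 = Complex.normSq s := by
    rw [Complex.normSq_apply]; ring
  have hV : 0 < (a ^ 2 + b ^ 2) * (N / 2) := by
    rw [hab2]
    exact mul_pos (Complex.normSq_pos.mpr hs0) (by linarith)
  -- numeric identity
  have hss : Complex.normSq s = ‖s‖ ^ 2 := (Complex.sq_norm s).symm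
  have hsqV : Real.sqrt ((a ^ 2 + b ^ 2) * (N / 2))
      = ‖s‖ * Real.sqrt (N / 2) := by
    rw [hab2, hss, Real.sqrt_mul (sq_nonneg _), Real.sqrt_sq (norm_nonneg s)]
  have h2N : Real.sqrt (2 * N) = 2 * Real.sqrt (N / 2) := by
    rw [show 2 * N = 2 ^ 2 * (N / 2) by ring, Real.sqrt_mul (by positivity),
      Real.sqrt_sq (by norm_num)]
  have hN2pos : 0 < Real.sqrt (N / 2) := Real.sqrt_pos.mpr (by linarith)
  have harg : -(c / Real.sqrt ((a ^ 2 + b ^ 2) * (N / 2)))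
      = ‖h‖ * d / Real.sqrt (2 * N) := by
    rw [hsqV, hc, hss, ← habs_s, h2N, sq]
    field_simp
  rw [aux_gauss_Iic _ hV c, harg, gaussQ]
end
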